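/- Let F : ℝⁿ → ℝ be ρ-convex (ρ > 0) and X : [0,T] → ℝⁿ a solution of Newton's equation Ẍ_t = F''(X_t)F'(X_t) with X_0 = x, X_T = y, and S_t(x) the gradient flow of F starting at x. If |φ_t| ≤ g(t) for an integrable function g, where φ_t = Ẋ_t + F'(X_t), then |X_t − S_t(x)| ≤ ∫₀ᵗ g(s) ds for all t ∈ [0,T]. -/

import Mathlib

open Set MeasureTheory intervalIntegral

/-- Monotonicity of the gradient from positive semidefinite Hessian. -/
lemma grad_mono_aux {d : ℕ} {ρ : ℝ} (hρ : 0 < ρ)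
    (F' : EuclideanSpace ℝ (Fin d) → EuclideanSpace ℝ (Fin d))
    (F'' : EuclideanSpace ℝ (Fin d) → EuclideanSpace ℝ (Fin d) →L[ℝ] EuclideanSpace ℝ (Fin d))
    (hhess : ∀ x, HasFDerivAt F' (F'' x) x)
    (hconv : ∀ x v, ρ * ‖v‖ ^ 2 ≤ (inner ℝ (F'' x v) v : ℝ))
    (a b : EuclideanSpace ℝ (Fin d)) :
    0 ≤ (inner ℝ (F' a - F' b) (a - b) : ℝ) := by
  set v : EuclideanSpace ℝ (Fin d) := a - b with hv
  have hq : ∀ τ : ℝ, HasDerivAt (fun τ : ℝ => (inner ℝ (F' (b + τ • v)) v : ℝ))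
      (inner ℝ (F'' (b + τ • v) v) v) τ := by
    intro τ
    have hp : HasDerivAt (fun τ : ℝ => b + τ • v) v τ := by
      simpa using ((hasDerivAt_id τ).smul_const v).const_add b
    have hF : HasDerivAt (fun τ : ℝ => F' (b + τ • v)) (F'' (b + τ • v) v) τ :=
      (hhess _).comp_hasDerivAt τ hp
    simpa using hF.inner ℝ (hasDerivAt_const τ v)
  have hmono : Monotone (fun τ : ℝ => (inner ℝ (F' (b + τ • v)) v : ℝ)) := by
    apply monotone_of_deriv_nonneg
    · exact fun τ => (hq τ).differentiableAt
    · intro τ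
      rw [(hq τ).deriv]
      exact le_trans (by positivity) (hconv _ _)
  have h01 : (inner ℝ (F' (b + (0:ℝ) • v)) v : ℝ) ≤ inner ℝ (F' (b + (1:ℝ) • v)) v :=
    hmono zero_le_one
  have e0 : b + (0:ℝ) • v = b := by simp
  have e1 : b + (1:ℝ) • v = a := by simp [hv]
  rw [e0, e1] at h01
  rw [inner_sub_left]
  linarith

/-- If `|φ_t| ≤ g(t)` with `g` integrable, then under `ρ`-convexity the Newton
interpolation stays within `∫₀ᵗ g` of the gradient flow started at the same point. -/
theorem stmt_17 (d : ℕ) (ρ T : ℝ) (hρ : 0 < ρ) (hT : 0 < T)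
    (F : EuclideanSpace ℝ (Fin d) → ℝ)
    (F' : EuclideanSpace ℝ (Fin d) → EuclideanSpace ℝ (Fin d))
    (F'' : EuclideanSpace ℝ (Fin d) → EuclideanSpace ℝ (Fin d) →L[ℝ] EuclideanSpace ℝ (Fin d))
    (hgrad : ∀ x, HasGradientAt F (F' x) x)
    (hhess : ∀ x, HasFDerivAt F' (F'' x) x)
    (hconv : ∀ x v, ρ * ‖v‖ ^ 2 ≤ (inner ℝ (F'' x v) v : ℝ))
    (x y : EuclideanSpace ℝ (Fin d))
    (X X' : ℝ → EuclideanSpace ℝ (Fin d))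
    (hX0 : X 0 = x) (hXT : X T = y)
    (hX : ∀ t ∈ Set.Icc (0:ℝ) T, HasDerivAt X (X' t) t)
    (hNewton : ∀ t ∈ Set.Icc (0:ℝ) T, HasDerivAt X' (F'' (X t) (F' (X t))) t)
    (S : ℝ → EuclideanSpace ℝ (Fin d))
    (hS0 : S 0 = x)
    (hS : ∀ t ∈ Set.Icc (0:ℝ) T, HasDerivAt S (-F' (S t)) t)
    (g : ℝ → ℝ)
    (hg_int : IntervalIntegrable g MeasureTheory.volume 0 T)
    (hg : ∀ t ∈ Set.Icc (0:ℝ) T, ‖X' t + F' (X t)‖ ≤ g t) :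
    ∀ t ∈ Set.Icc (0:ℝ) T, ‖X t - S t‖ ≤ ∫ s in (0:ℝ)..t, g s := by
  intro t ht
  obtain ⟨ht0, htT⟩ := ht
  set v : ℝ → EuclideanSpace ℝ (Fin d) := fun s => X s - S s with hvdef
  set vd : ℝ → EuclideanSpace ℝ (Fin d) := fun s => X' s + F' (S s) with hvddef
  have hv : ∀ s ∈ Icc (0:ℝ) T, HasDerivAt v (vd s) s := by
    intro s hs
    have h := (hX s hs).sub (hS s hs); rw [sub_neg_eq_add] at h; exact h
  set u : ℝ → ℝ := fun s => (inner ℝ (v s) (v s) : ℝ) with hudef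
  have hu : ∀ s ∈ Icc (0:ℝ) T,
      HasDerivAt u (2 * (inner ℝ (vd s) (v s) : ℝ)) s := by
    intro s hs
    have := (hv s hs).inner ℝ (hv s hs)
    simpa [hudef, real_inner_comm (v s) (vd s), two_mul] using this
  have hunn : ∀ s, 0 ≤ u s := fun s => real_inner_self_nonneg
  have huns : ∀ s, u s = ‖v s‖ ^ 2 := fun s => real_inner_self_eq_norm_sq (v s)
  -- continuity facts on [0,T]
  have hvcont : ContinuousOn v (Icc 0 T) := fun s hs => ((hv s hs).continuousAt).continuousWithinAt
  have hvdcont : ContinuousOn vd (Icc 0 T) := by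
    intro s hs
    exact ((hNewton s hs).continuousAt.add
      (((hhess (S s)).continuousAt).comp (hS s hs).continuousAt)).continuousWithinAt
  have hIcc : Icc (0:ℝ) t ⊆ Icc 0 T := Icc_subset_Icc le_rfl htT
  apply le_of_forall_pos_le_add
  intro ε hε
  have hpos : ∀ s, 0 < u s + ε ^ 2 := fun s =>
    add_pos_of_nonneg_of_pos (hunn s) (by positivity)
  set h : ℝ → ℝ := fun s => Real.sqrt (u s + ε ^ 2) with hhdef
  have hhpos : ∀ s, 0 < h s := fun s => Real.sqrt_pos.mpr (hpos s)
  set D : ℝ → ℝ := fun s => (2 * (inner ℝ (vd s) (v s) : ℝ)) / (2 * h s) with hDdef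
  have hh : ∀ s ∈ Icc (0:ℝ) T, HasDerivAt h (D s) s := by
    intro s hs
    exact ((hu s hs).add_const _).sqrt (ne_of_gt (hpos s))
  -- D is continuous on [0,T]
  have hDcont : ContinuousOn D (Icc 0 T) := by
    apply ContinuousOn.div
    · exact continuousOn_const.mul (hvdcont.inner hvcont)
    · exact continuousOn_const.mul
        (((hvcont.inner hvcont).add continuousOn_const).sqrt)
    · intro s _
      exact mul_ne_zero two_ne_zero (ne_of_gt (hhpos s))
  -- pointwise bound D ≤ g on [0,T]
  have hbound : ∀ s ∈ Icc (0:ℝ) T, D s ≤ g s := by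
    intro s hs
    have hφ : (inner ℝ (X' s + F' (X s)) (v s) : ℝ) ≤ g s * ‖v s‖ :=
      le_trans (real_inner_le_norm _ _)
        (mul_le_mul_of_nonneg_right (hg s hs) (norm_nonneg _))
    have hdec : (inner ℝ (vd s) (v s) : ℝ)
        = inner ℝ (X' s + F' (X s)) (v s) - inner ℝ (F' (X s) - F' (S s)) (X s - S s) := by
      have : vd s = (X' s + F' (X s)) - (F' (X s) - F' (S s)) := by
        simp [hvddef]; abel
      rw [this, inner_sub_left]
    have hmono := grad_mono_aux hρ F' F'' hhess hconv (X s) (S s)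
    have hvle : ‖v s‖ ≤ h s := by
      rw [hhdef]
      calc ‖v s‖ = Real.sqrt (u s) := by rw [huns s, Real.sqrt_sq (norm_nonneg _)]
        _ ≤ Real.sqrt (u s + ε ^ 2) := Real.sqrt_le_sqrt (le_add_of_nonneg_right (by positivity))
    have hgnn : 0 ≤ g s := le_trans (norm_nonneg _) (hg s hs)
    have hkey : (inner ℝ (vd s) (v s) : ℝ) ≤ g s * h s := by
      rw [hdec]
      calc (inner ℝ (X' s + F' (X s)) (v s) : ℝ) - inner ℝ (F' (X s) - F' (S s)) (X s - S s)
          ≤ inner ℝ (X' s + F' (X s)) (v s) := by linarith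
        _ ≤ g s * ‖v s‖ := hφ
        _ ≤ g s * h s := mul_le_mul_of_nonneg_left hvle hgnn
    show 2 * (inner ℝ (vd s) (v s) : ℝ) / (2 * h s) ≤ g s
    rw [div_le_iff₀ (by have := hhpos s; positivity)]
    nlinarith [hhpos s]
  -- FTC and comparison on [0,t]
  have hDcont' : ContinuousOn D (Icc 0 t) := hDcont.mono hIcc
  have hDint : IntervalIntegrable D volume 0 t := hDcont'.intervalIntegrable_of_Icc ht0
  have hgint : IntervalIntegrable g volume 0 t :=
    hg_int.mono_set (by rw [uIcc_of_le ht0, uIcc_of_le (le_of_lt hT)]; exact hIcc)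
  have hFTC : ∫ s in (0:ℝ)..t, D s = h t - h 0 := by
    apply intervalIntegral.integral_eq_sub_of_hasDerivAt
    · intro s hs
      rw [uIcc_of_le ht0] at hs
      exact hh s (hIcc hs)
    · exact hDint
  have hcomp : ∫ s in (0:ℝ)..t, D s ≤ ∫ s in (0:ℝ)..t, g s :=
    intervalIntegral.integral_mono_on ht0 hDint hgint (fun s hs => hbound s (hIcc hs))
  have hh0 : h 0 = ε := by
    have : u 0 = 0 := by simp [hudef, hvdef, hX0, hS0]
    rw [hhdef]
    simp only [this, zero_add]
    exact Real.sqrt_sq (le_of_lt hε)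
  have hfin : h t ≤ (∫ s in (0:ℝ)..t, g s) + ε := by
    have := hFTC ▸ hcomp
    linarith [hh0 ▸ this]
  calc ‖X t - S t‖ ≤ h t := by
        show ‖X t - S t‖ ≤ Real.sqrt (u t + ε ^ 2)
        calc ‖X t - S t‖ = Real.sqrt (u t) := by
              rw [huns t, Real.sqrt_sq (norm_nonneg _)]
          _ ≤ Real.sqrt (u t + ε ^ 2) :=
              Real.sqrt_le_sqrt (le_add_of_nonneg_right (by positivity))
    _ ≤ (∫ s in (0:ℝ)..t, g s) + ε := hfin
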